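/- Let L be a finitely generated free ℤ-module and B : L → L → ℤ a symmetric ℤ-bilinear form. Let S ⊆ L be a finite subset and T the ℤ-submodule spanned by S, and assume B is negative definite on T, i.e. B(t, t) < 0 for every nonzero t ∈ T. Let a ∈ L satisfy B(a, s) = 0 for every s ∈ S. If the set of natural numbers k for which there exist b ∈ L and t ∈ T with a = k • b + t is infinite, then a = 0. -/

import Mathlib

/-- Let `L` be a finitely generated free `ℤ`-module with a symmetric bilinear form
`B : L → L → ℤ`. Let `S ⊆ L` be a finite subset spanning the submodule `T`, on which `B`
is negative definite, and let `a ∈ L` be orthogonal to every element of `S`. If there are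
infinitely many `k ∈ ℕ` for which `a = k • b + t` with `b ∈ L`, `t ∈ T`, then `a = 0`. -/
theorem eq_zero_of_orth_negdef_infinitely_divisible_mod (L : Type*) [AddCommGroup L]
    [Module.Finite ℤ L] [Module.Free ℤ L]
    (B : L →ₗ[ℤ] L →ₗ[ℤ] ℤ) (hsymm : ∀ x y, B x y = B y x)
    (S : Set L) (hS : S.Finite)
    (hneg : ∀ t ∈ Submodule.span ℤ S, t ≠ 0 → B t t < 0)
    (a : L) (ha : ∀ s ∈ S, B a s = 0)
    (h : {k : ℕ | ∃ b : L, ∃ t ∈ Submodule.span ℤ S, a = k • b + t}.Infinite) :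
    a = 0 := by
  set T := Submodule.span ℤ S with hT
  -- B a t = 0 for all t ∈ T
  have haT : ∀ t ∈ T, B a t = 0 := by
    intro t ht
    induction ht using Submodule.span_induction with
    | mem s hs => exact ha s hs
    | zero => simp
    | add x y _ _ hx hy => simp [hx, hy]
    | smul c x _ hx => simp [hx]
  -- image of a in the torsion-free quotient of L ⧸ T
  have key : ∃ m : ℤ, m ≠ 0 ∧ m • a ∈ T := by
    let G := L ⧸ T
    let x : G := Submodule.Quotient.mk a
    have hx : ∀ k ∈ {k : ℕ | ∃ b : L, ∃ t ∈ T, a = k • b + t}, ∃ y : G, x = (k : ℤ) • y := by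
      rintro k ⟨b, t, ht, hab⟩
      refine ⟨Submodule.Quotient.mk b, ?_⟩
      have : x = Submodule.Quotient.mk (k • b + t) := by rw [← hab]
      rw [this]
      simp only [Submodule.Quotient.mk_add, Submodule.Quotient.mk_smul]
      rw [(Submodule.Quotient.mk_eq_zero T).2 ht]
      simp [Int.smul_one_eq_cast]
    let Q := G ⧸ Submodule.torsion ℤ G
    let z : Q := Submodule.Quotient.mk x
    have hz : ∀ k ∈ {k : ℕ | ∃ b : L, ∃ t ∈ T, a = k • b + t}, ∃ w : Q, z = (k : ℤ) • w := by
      intro k hk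
      obtain ⟨y, hy⟩ := hx k hk
      exact ⟨Submodule.Quotient.mk y, by rw [show z = Submodule.Quotient.mk x from rfl, hy]; simp⟩
    have : Module.Free ℤ Q := Module.free_of_finite_type_torsion_free'
    have hz0 : z = 0 := by
      let bQ := Module.Free.chooseBasis ℤ Q
      have hrepr : bQ.repr z = 0 := by
        ext i
        by_contra hc
        simp only [Finsupp.zero_apply] at hc
        obtain ⟨k, hk, hklt⟩ := h.exists_gt (bQ.repr z i).natAbs
        obtain ⟨w, hw⟩ := hz k hk
        have hdvd : (k : ℤ) ∣ bQ.repr z i := by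
          refine ⟨bQ.repr w i, ?_⟩
          rw [hw]
          simp
        have hdn : k ∣ (bQ.repr z i).natAbs := by
          have := Int.natAbs_dvd_natAbs.2 hdvd
          simpa using this
        have := Nat.le_of_dvd (Int.natAbs_pos.2 hc) hdn
        omega
      exact bQ.repr.map_eq_zero_iff.1 hrepr
    have hxtor : x ∈ Submodule.torsion ℤ G := (Submodule.Quotient.mk_eq_zero _).1 hz0
    obtain ⟨⟨m, hm⟩, hmx⟩ := hxtor
    refine ⟨m, nonZeroDivisors.coe_ne_zero ⟨m, hm⟩, ?_⟩
    have : Submodule.Quotient.mk (m • a) = (0 : G) := by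
      rw [Submodule.Quotient.mk_smul]; exact hmx
    exact (Submodule.Quotient.mk_eq_zero T).1 this
  obtain ⟨m, hm0, hma⟩ := key
  -- B a a = 0
  have hBaa : B a a = 0 := by
    have := haT (m • a) hma
    simp only [map_smul, smul_eq_mul] at this
    exact (mul_eq_zero.1 this).resolve_left hm0
  -- m • a = 0
  have hma0 : m • a = 0 := by
    by_contra hne
    have := hneg (m • a) hma hne
    simp only [map_smul, LinearMap.smul_apply, smul_eq_mul, hBaa, mul_zero] at this
    omega
  have : NoZeroSMulDivisors ℤ L :=
    have := Module.isTorsionFree_int_iff_isAddTorsionFree.1 (inferInstance : Module.IsTorsionFree ℤ L)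
    inferInstance
  rcases smul_eq_zero.1 hma0 with h1 | h1
  · exact absurd h1 hm0
  · exact h1
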